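/- Suppose h : ℝ → ℝ is differentiable on an interval and satisfies h'(x) = 2c³/(κc² − h(x)²) with κc² − h(x)² ≠ 0, where c ≠ 0. Then for some constant α, h satisfies the cubic equation h(x)³ − 3κc²·h(x) + 6c³(x + α) = 0 for all x in the interval. -/

import Mathlib

/-- If `h' = 2c³/(κc² − h²)` on an interval, with `c ≠ 0` and
`κc² − h² ≠ 0` there, then for some constant `α`,
`h³ − 3κc²h + 6c³(x + α) = 0` on the interval. -/
theorem stmt2 (h : ℝ → ℝ) (a b c κ : ℝ) (hc : c ≠ 0)
    (hne : ∀ x ∈ Set.Ioo a b, κ * c ^ 2 - (h x) ^ 2 ≠ 0)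
    (hODE : ∀ x ∈ Set.Ioo a b,
      HasDerivAt h (2 * c ^ 3 / (κ * c ^ 2 - (h x) ^ 2)) x) :
    ∃ α : ℝ, ∀ x ∈ Set.Ioo a b,
      (h x) ^ 3 - 3 * κ * c ^ 2 * h x + 6 * c ^ 3 * (x + α) = 0 := by
  set F : ℝ → ℝ := fun x => (h x) ^ 3 - 3 * κ * c ^ 2 * h x + 6 * c ^ 3 * x with hF
  have hF' : ∀ x ∈ Set.Ioo a b, HasDerivAt F 0 x := by
    intro x hx
    have hd := hODE x hx
    have : HasDerivAt F
        (3 * (h x) ^ 2 * (2 * c ^ 3 / (κ * c ^ 2 - (h x) ^ 2))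
          - 3 * κ * c ^ 2 * (2 * c ^ 3 / (κ * c ^ 2 - (h x) ^ 2))
          + 6 * c ^ 3 * 1) x := by
      have h1 : HasDerivAt (fun x => (h x) ^ 3)
          (3 * (h x) ^ 2 * (2 * c ^ 3 / (κ * c ^ 2 - (h x) ^ 2))) x := by
        have : HasDerivAt (fun x => (h x) ^ 3) _ x := hd.pow 3
        simpa [mul_comm, mul_assoc, mul_left_comm] using this
      have h2 : HasDerivAt (fun x => 3 * κ * c ^ 2 * h x)
          (3 * κ * c ^ 2 * (2 * c ^ 3 / (κ * c ^ 2 - (h x) ^ 2))) x := hd.const_mul _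
      have h3 : HasDerivAt (fun x => 6 * c ^ 3 * x) (6 * c ^ 3 * 1) x :=
        (hasDerivAt_id x).const_mul _
      exact (h1.sub h2).add h3
    convert this using 1
    have hnz := hne x hx
    have e : (κ * c ^ 2 - h x ^ 2) * (κ * c ^ 2 - h x ^ 2)⁻¹ = 1 := mul_inv_cancel₀ hnz
    linear_combination (6 * c ^ 3) * e
  rcases le_or_gt b a with hba | hab
  · exact ⟨0, fun x hx => absurd hx (by simp [Set.Ioo_eq_empty_iff.mpr (not_lt.mpr hba)])⟩
  · set x₀ : ℝ := (a + b) / 2 with hx₀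
    have hx₀m : x₀ ∈ Set.Ioo a b := ⟨by linarith, by linarith⟩
    have hconst : ∀ x ∈ Set.Ioo a b, F x = F x₀ := by
      intro x hx
      have := (convex_Ioo a b).norm_image_sub_le_of_norm_hasDerivWithin_le
        (fun y hy => (hF' y hy).hasDerivWithinAt) (C := 0)
        (fun y hy => by simp) hx₀m hx
      have : ‖F x - F x₀‖ ≤ 0 := by simpa using this
      have := norm_le_zero_iff.mp this
      linarith [sub_eq_zero.mp this]
    refine ⟨-F x₀ / (6 * c ^ 3), fun x hx => ?_⟩
    have hFx := hconst x hx
    have h6 : (6 : ℝ) * c ^ 3 ≠ 0 := by positivity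
    have : F x + 6 * c ^ 3 * (-F x₀ / (6 * c ^ 3)) = 0 := by
      rw [hFx]; field_simp; ring
    simp only [hF] at this
    linarith [this]
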